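/- Let α > 0 and β = (α + √(4α + α²))³/(8α). Then Σ_{n=⌈(m+1)/2⌉}^{2m} (m/(n+m)) · binom(m+n, 2m-n) · α^n = (1/3) β^m (1 + O(1/m)) as m → ∞. -/

import Mathlib

open Finset

noncomputable def Gs (t : ℝ) (N : ℕ) : ℝ :=
  ∑ k ∈ Finset.range (N+1), (Nat.choose (N-k) k : ℝ) * t^k

lemma Gs_zero (t : ℝ) : Gs t 0 = 1 := by simp [Gs]

lemma Gs_one (t : ℝ) : Gs t 1 = 1 := by
  simp [Gs, Finset.sum_range_succ]

lemma Gs_rec (t : ℝ) (N : ℕ) : Gs t (N+2) = Gs t (N+1) + t * Gs t N := by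
  have h2 : Gs t (N+2)
      = ∑ k ∈ Finset.range (N+2), (Nat.choose (N+1-k) (k+1) : ℝ) * t^(k+1) + 1 := by
    rw [Gs, Finset.sum_range_succ' (fun k => (Nat.choose (N+2-k) k : ℝ) * t^k) (N+2)]
    simp only [Nat.choose_zero_right, Nat.cast_one, pow_zero, mul_one]
    congr 1
    apply Finset.sum_congr rfl
    intro k hk
    have e : N+2-(k+1) = N+1-k := by omega
    rw [e]
  have h3 : ∑ k ∈ Finset.range (N+2), (Nat.choose (N+1-k) (k+1) : ℝ) * t^(k+1)
      = ∑ k ∈ Finset.range (N+1), (Nat.choose (N+1-k) (k+1) : ℝ) * t^(k+1) := by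
    rw [Finset.sum_range_succ]
    simp
  have h4 : ∀ k ∈ Finset.range (N+1),
      (Nat.choose (N+1-k) (k+1) : ℝ) * t^(k+1)
      = (Nat.choose (N-k) k : ℝ) * t^(k+1) + (Nat.choose (N-k) (k+1) : ℝ) * t^(k+1) := by
    intro k hk
    have hkN : k ≤ N := by simpa [Nat.lt_succ_iff] using hk
    have : N + 1 - k = (N - k) + 1 := by omega
    rw [this, Nat.choose_succ_succ]
    push_cast
    ring
  have h5 : Gs t (N+1)
      = ∑ k ∈ Finset.range (N+1), (Nat.choose (N-k) (k+1) : ℝ) * t^(k+1) + 1 := by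
    rw [Gs, Finset.sum_range_succ' (fun k => (Nat.choose (N+1-k) k : ℝ) * t^k) (N+1)]
    simp only [Nat.choose_zero_right, Nat.cast_one, pow_zero, mul_one]
    congr 1
    apply Finset.sum_congr rfl
    intro k hk
    have e : N+1-(k+1) = N-k := by omega
    rw [e]
  have h6 : t * Gs t N = ∑ k ∈ Finset.range (N+1), (Nat.choose (N-k) k : ℝ) * t^(k+1) := by
    rw [Gs, Finset.mul_sum]
    apply Finset.sum_congr rfl
    intro k hk
    ring
  rw [h2, h3, Finset.sum_congr rfl h4, Finset.sum_add_distrib, h5, h6]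
  ring

lemma Gs_closed (t a b : ℝ) (hab : a + b = 1) (hm : a * b = -t) :
    ∀ N, (a - b) * Gs t N = a^(N+1) - b^(N+1) := by
  have hb : b = 1 - a := by linarith
  have ht : t = -(a*b) := by linarith
  intro N
  induction N using Nat.twoStepInduction with
  | zero => rw [Gs_zero]; ring
  | one => rw [Gs_one]; subst hb; ring
  | more n ih1 ih2 =>
      rw [Gs_rec]
      have : (a-b) * (Gs t (n+1) + t * Gs t n)
          = (a^(n+2) - b^(n+2)) + t * (a^(n+1) - b^(n+1)) := by
        rw [← ih1, ← ih2]; ring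
      rw [this, ht, hb]; ring


lemma main_sum (α : ℝ) (hα : 0 < α) (m : ℕ) (hm : 1 ≤ m) :
    ∑ n ∈ Finset.Icc ((m + 2) / 2) (2 * m),
        ((m : ℝ) / (n + m)) * (Nat.choose (m + n) (2 * m - n)) * α ^ n
    = (1/3) * α^(2*m) * (Gs α⁻¹ (3*m) + α⁻¹ * Gs α⁻¹ (3*m-2)
        - (if Even m then 2 * (α⁻¹)^(3*(m/2)) else 0)) := by
  set t : ℝ := α⁻¹ with htdef
  have ht : 0 < t := inv_pos.mpr hα
  set L : ℕ := (m+2)/2 with hLdef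
  set K : ℕ := 2*m - L with hKdef
  have hL1 : 1 ≤ L := by omega
  have hL2 : L ≤ 2*m := by omega
  have hK3 : K + 1 ≤ 3*m := by omega
  set vv : ℕ → ℝ := fun k => if k = 0 then 0 else (Nat.choose (3*m-1-k) (k-1) : ℝ) with hvv
  set g : ℕ → ℝ :=
    fun k => (1/3) * ((Nat.choose (3*m-k) k : ℝ) + vv k) * (α^(2*m) * t^k) with hg
  -- pointwise identity
  have key : ∀ n ∈ Finset.Icc L (2*m),
      ((m : ℝ) / (n + m)) * (Nat.choose (m + n) (2 * m - n)) * α ^ n = g (2*m - n) := by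
    intro n hn
    rw [Finset.mem_Icc] at hn
    obtain ⟨hn1, hn2⟩ := hn
    set k : ℕ := 2*m - n with hk
    have e1 : m + n = 3*m - k := by omega
    have ekm : k ≤ 2*m := by omega
    have hcast : ((3*m - k : ℕ) : ℝ) = (n:ℝ) + m := by
      have h3 : 3*m - k = m + n := by omega
      rw [h3]; push_cast; ring
    have hnm_pos : (0:ℝ) < (n:ℝ) + m := by
      have : (1:ℝ) ≤ (m:ℝ) := by exact_mod_cast hm
      positivity
    have epow : α^(2*m) * t^k = α^n := by
      have h2 : 2*m = n + k := by omega
      rw [h2, pow_add, htdef, inv_pow]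
      field_simp
    simp only [hg]
    rw [e1]
    by_cases hk0 : k = 0
    · have hn' : n = 2*m := by omega
      have hvv0 : vv k = 0 := by simp [hvv, hk0]
      rw [hvv0, hk0]
      simp only [Nat.choose_zero_right, Nat.cast_one, Nat.sub_zero]
      have hn3 : (n:ℝ) + m = 3*m := by
        have : n = 2*m := hn'
        rw [this]; push_cast; ring
      rw [hn3]
      rw [hk0] at epow
      rw [epow]
      have hm' : (0:ℝ) < (m:ℝ) := by exact_mod_cast hm
      field_simp
      ring
    · have hk1 : 1 ≤ k := by omega
      -- Nat identity
      have hs := Nat.add_one_mul_choose_eq (3*m-k-1) (k-1)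
      have e2 : 3*m-k-1+1 = 3*m-k := by omega
      have e3 : k-1+1 = k := by omega
      rw [e2, e3] at hs
      -- hs : (3*m-k) * (3*m-k-1).choose (k-1) = (3*m-k).choose k * k
      have e4 : 3*m-k-1 = 3*m-1-k := by omega
      rw [e4] at hs
      have hNat : 3*m * Nat.choose (3*m-k) k
          = (3*m-k) * (Nat.choose (3*m-k) k + Nat.choose (3*m-1-k) (k-1)) := by
        have h5 : 3*m * Nat.choose (3*m-k) k
            = (3*m-k) * Nat.choose (3*m-k) k + k * Nat.choose (3*m-k) k := by
          rw [← add_mul]; congr 1; omega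
        rw [h5, mul_add]
        congr 1
        rw [mul_comm k _, ← hs, mul_comm]
      have hNatR : (3*m : ℝ) * (Nat.choose (3*m-k) k : ℝ)
          = ((3*m-k : ℕ) : ℝ) * ((Nat.choose (3*m-k) k : ℝ) + (Nat.choose (3*m-1-k) (k-1) : ℝ)) := by
        exact_mod_cast hNat
      rw [hcast] at hNatR
      have hvvk : vv k = (Nat.choose (3*m-1-k) (k-1) : ℝ) := by simp [hvv, hk0]
      rw [hvvk, epow]
      rw [div_mul_eq_mul_div, div_mul_eq_mul_div, div_eq_iff (ne_of_gt hnm_pos)]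
      have hmR : (3:ℝ) * m = 3 * (m:ℝ) := by ring
      nlinarith [hNatR, pow_pos hα n]
  rw [Finset.sum_congr rfl key]
  have reindex : ∑ n ∈ Finset.Icc L (2*m), g (2*m - n) = ∑ k ∈ Finset.range (K+1), g k := by
    apply Finset.sum_nbij' (i := fun n => 2*m - n) (j := fun k => 2*m - k)
    · intro a ha; simp only [Finset.mem_Icc] at ha; simp only [Finset.mem_range]; omega
    · intro a ha; simp only [Finset.mem_range] at ha; simp only [Finset.mem_Icc]; omega
    · intro a ha; simp only [Finset.mem_Icc] at ha; omega
    · intro a ha; simp only [Finset.mem_range] at ha; omega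
    · intro a ha; rfl
  rw [reindex]
  -- split the sum
  have split : ∑ k ∈ Finset.range (K+1), g k
      = (1/3) * α^(2*m) *
        ((∑ k ∈ Finset.range (K+1), (Nat.choose (3*m-k) k : ℝ) * t^k)
          + (∑ k ∈ Finset.range (K+1), vv k * t^k)) := by
    rw [mul_add, Finset.mul_sum, Finset.mul_sum, ← Finset.sum_add_distrib]
    apply Finset.sum_congr rfl
    intro k _
    rw [hg]
    ring
  rw [split]
  set ε : ℝ := if Even m then t^(3*(m/2)) else 0 with hε
  have hA : ∑ k ∈ Finset.range (K+1), (Nat.choose (3*m-k) k : ℝ) * t^k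
      = Gs t (3*m) - ε := by
    have hsplit : ∑ k ∈ Finset.range (K+1), (Nat.choose (3*m-k) k : ℝ) * t^k
        + ∑ k ∈ Finset.Ico (K+1) (3*m+1), (Nat.choose (3*m-k) k : ℝ) * t^k
        = Gs t (3*m) := by
      rw [Gs]
      simp only [Finset.range_eq_Ico]
      exact Finset.sum_Ico_consecutive _ (by omega) (by omega)
    have htail : ∑ k ∈ Finset.Ico (K+1) (3*m+1), (Nat.choose (3*m-k) k : ℝ) * t^k = ε := by
      rcases Nat.even_or_odd m with he | ho
      · obtain ⟨p, hp⟩ := he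
        have hp1 : 1 ≤ p := by omega
        have hK : K + 1 = 3*p := by omega
        rw [hK]
        rw [Finset.sum_eq_single (3*p)]
        · have : 3*m - 3*p = 3*p := by omega
          rw [this, Nat.choose_self, hε, if_pos ⟨p, hp⟩]
          have : 3*(m/2) = 3*p := by omega
          rw [this]; simp
        · intro b hb hbne
          rw [Finset.mem_Ico] at hb
          have : 3*m - b < b := by omega
          rw [Nat.choose_eq_zero_of_lt this]; simp
        · intro h
          exfalso; apply h; rw [Finset.mem_Ico]; omega
      · obtain ⟨p, hp⟩ := ho
        have hK : K + 1 = 3*p+2 := by omega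
        rw [hε, if_neg (by simp [Nat.even_iff, hp, Nat.add_mod])]
        rw [hK]
        apply Finset.sum_eq_zero
        intro b hb
        rw [Finset.mem_Ico] at hb
        have : 3*m - b < b := by omega
        rw [Nat.choose_eq_zero_of_lt this]; simp
    linarith [hsplit, htail]
  have hB : ∑ k ∈ Finset.range (K+1), vv k * t^k
      = t * Gs t (3*m-2) - ε := by
    have hW : ∑ k ∈ Finset.range (3*m), vv k * t^k = t * Gs t (3*m-2) := by
      have hGs2 : t * Gs t (3*m-2)
          = ∑ j ∈ Finset.range (3*m-1), (Nat.choose (3*m-2-j) j : ℝ) * t^(j+1) := by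
        rw [Gs, Finset.mul_sum]
        have h32 : 3*m-2+1 = 3*m-1 := by omega
        rw [h32]
        apply Finset.sum_congr rfl
        intro j hj
        ring
      rw [hGs2]
      have hss := Finset.sum_range_succ' (fun k => vv k * t^k) (3*m-1)
      rw [show 3*m-1+1 = 3*m from by omega] at hss
      rw [hss]
      have hv0 : vv 0 * t^0 = 0 := by simp [hvv]
      simp only [hv0, add_zero]
      apply Finset.sum_congr rfl
      intro j hj
      have hvj : vv (j+1) = (Nat.choose (3*m-2-j) j : ℝ) := by
        have e : 3*m-1-(j+1) = 3*m-2-j := by omega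
        simp [hvv, e]
      rw [hvj]
    have hsplit : ∑ k ∈ Finset.range (K+1), vv k * t^k
        + ∑ k ∈ Finset.Ico (K+1) (3*m), vv k * t^k
        = ∑ k ∈ Finset.range (3*m), vv k * t^k := by
      simp only [Finset.range_eq_Ico]
      exact Finset.sum_Ico_consecutive _ (by omega) (by omega)
    have htail : ∑ k ∈ Finset.Ico (K+1) (3*m), vv k * t^k = ε := by
      rcases Nat.even_or_odd m with he | ho
      · obtain ⟨p, hp⟩ := he
        have hp1 : 1 ≤ p := by omega
        have hK : K + 1 = 3*p := by omega
        rw [hK]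
        rw [Finset.sum_eq_single (3*p)]
        · have hne0 : (3*p : ℕ) ≠ 0 := by omega
          have e : 3*m-1-3*p = 3*p-1 := by omega
          have e2 : 3*p-1 = 3*p-1 := rfl
          simp only [hvv, if_neg hne0, e]
          rw [Nat.choose_self, hε, if_pos ⟨p, hp⟩]
          have : 3*(m/2) = 3*p := by omega
          simp [this]
        · intro b hb hbne
          rw [Finset.mem_Ico] at hb
          have hbne0 : b ≠ 0 := by omega
          have : 3*m-1-b < b-1 := by omega
          simp only [hvv, if_neg hbne0]
          rw [Nat.choose_eq_zero_of_lt this]; simp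
        · intro h
          exfalso; apply h; rw [Finset.mem_Ico]; omega
      · obtain ⟨p, hp⟩ := ho
        have hK : K + 1 = 3*p+2 := by omega
        rw [hε, if_neg (by simp [Nat.even_iff, hp, Nat.add_mod])]
        rw [hK]
        apply Finset.sum_eq_zero
        intro b hb
        rw [Finset.mem_Ico] at hb
        have hbne0 : b ≠ 0 := by omega
        have : 3*m-1-b < b-1 := by omega
        simp only [hvv, if_neg hbne0]
        rw [Nat.choose_eq_zero_of_lt this]; simp
    linarith [hsplit, hW, htail]
  rw [hA, hB]
  have hite : (if Even m then 2 * t^(3*(m/2)) else 0) = 2 * ε := by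
    rw [hε]; split <;> ring
  rw [hite]
  ring

lemma Gs_pair (t a b : ℝ) (hab : a + b = 1) (hm : a * b = -t) (hne : a ≠ b) (N : ℕ) :
    Gs t (N+2) + t * Gs t N = a^(N+2) + b^(N+2) := by
  have h1 := Gs_closed t a b hab hm (N+2)
  have h2 := Gs_closed t a b hab hm N
  have hd : a - b ≠ 0 := sub_ne_zero.mpr hne
  apply mul_left_cancel₀ hd
  have hb : b = 1 - a := by linarith
  have ht : t = -(a*b) := by linarith
  calc (a-b) * (Gs t (N+2) + t * Gs t N)
      = (a-b) * Gs t (N+2) + t * ((a-b) * Gs t N) := by ring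
    _ = (a^(N+2+1) - b^(N+2+1)) + t * (a^(N+1) - b^(N+1)) := by rw [h1, h2]
    _ = (a-b) * (a^(N+2) + b^(N+2)) := by subst hb; subst ht; ring

lemma geo_bound (ρ : ℝ) (h0 : 0 ≤ ρ) (h1 : ρ < 1) (m : ℕ) (hm : 1 ≤ m) :
    (m:ℝ) * ρ^m * (1-ρ) ≤ 1 := by
  rcases eq_or_lt_of_le h0 with h | hpos
  · rw [← h, zero_pow (by omega : m ≠ 0)]
    norm_num
  · have hber : 1 + (m:ℝ) * (1/ρ - 1) ≤ (1/ρ)^m := by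
      have h' := one_add_mul_le_pow (a := 1/ρ - 1) (by
        have : 0 < 1/ρ := by positivity
        linarith) m
      rw [show (1 + (1/ρ - 1)) = 1/ρ from by ring] at h'
      exact h'
    have hinv : (1/ρ)^m * ρ^m = 1 := by
      rw [div_pow, one_pow]
      field_simp
    have hinv1 : ρ * (1/ρ) = 1 := by field_simp
    have hmono : (m:ℝ) * (1-ρ) ≤ (m:ℝ) * (1/ρ - 1) := by
      apply mul_le_mul_of_nonneg_left _ (by positivity)
      nlinarith [sq_nonneg (1-ρ)]
    have hpow : 0 < ρ^m := pow_pos hpos m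
    have key : (m:ℝ) * (1-ρ) ≤ (1/ρ)^m := by
      have hm1 : (1:ℝ) ≤ (m:ℝ) := by exact_mod_cast hm
      nlinarith
    calc (m:ℝ) * ρ^m * (1-ρ) = ((m:ℝ)*(1-ρ)) * ρ^m := by ring
      _ ≤ (1/ρ)^m * ρ^m := mul_le_mul_of_nonneg_right key (le_of_lt hpow)
      _ = 1 := hinv

lemma frac_aux (a t : ℝ) (p : ℕ) : t^(3*p)/a^(2*(3*p)) = (t/a^2)^(3*p) := by
  rw [div_pow, ← pow_mul]

lemma sq_aux (r q : ℝ) (hq : r^2 = q) (p : ℕ) : q^(3*p) = r^(2*(3*p)) := by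
  rw [← hq, ← pow_mul]

set_option maxHeartbeats 1000000 in
theorem stmt_11 (α : ℝ) (hα : 0 < α)
    (β : ℝ) (hβ : β = (α + Real.sqrt (4 * α + α ^ 2)) ^ 3 / (8 * α)) :
    ∃ C : ℝ, ∀ m : ℕ, 1 ≤ m →
      |(∑ n ∈ Finset.Icc ((m + 2) / 2) (2 * m),
          ((m : ℝ) / (n + m)) * (Nat.choose (m + n) (2 * m - n)) * α ^ n)
        / ((1 / 3) * β ^ m) - 1| ≤ C / m := by
  set t : ℝ := α⁻¹ with htdef
  have ht : 0 < t := inv_pos.mpr hα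
  set s : ℝ := Real.sqrt (1 + 4*t) with hsdef
  have hs2 : s^2 = 1 + 4*t := Real.sq_sqrt (by positivity)
  have hs1 : 1 < s := by
    have h : Real.sqrt 1 < Real.sqrt (1 + 4*t) :=
      Real.sqrt_lt_sqrt (by norm_num) (by linarith)
    simpa using h
  set a : ℝ := (1+s)/2 with hadef
  set b : ℝ := (1-s)/2 with hbdef
  have hab : a + b = 1 := by rw [hadef, hbdef]; ring
  have hmab : a * b = -t := by
    rw [hadef, hbdef]
    have : (1+s)/2 * ((1-s)/2) = (1 - s^2)/4 := by ring
    rw [this, hs2]; ring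
  have ha1 : 1 < a := by rw [hadef]; linarith
  have ha0 : 0 < a := by linarith
  have hbneg : b < 0 := by rw [hbdef]; linarith
  have hne : a ≠ b := by intro h; rw [h] at ha0; linarith
  have habs : |b| < a := by
    rw [abs_of_neg hbneg, hadef, hbdef]; linarith
  -- β = α² a³
  have hβa : β = α^2 * a^3 := by
    have hsq : (α*s)^2 = 4*α + α^2 := by
      rw [mul_pow, hs2, htdef]
      field_simp
      ring
    have hroot : Real.sqrt (4*α + α^2) = α * s := by
      rw [← hsq, Real.sqrt_sq (by positivity)]
    rw [hβ, hroot, hadef]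
    field_simp
    ring
  -- radii
  set r1 : ℝ := |b| / a with hr1def
  have hr10 : 0 ≤ r1 := by positivity
  have hr11 : r1 < 1 := (div_lt_one ha0).mpr habs
  have hta2 : t < a^2 := by
    have : (1+s)^2 = 2 + 2*s + 4*t := by rw [add_sq, hs2]; ring
    rw [hadef]; nlinarith
  set r2 : ℝ := Real.sqrt (t / a^2) with hr2def
  have hq0 : 0 ≤ t / a^2 := by positivity
  have hr20 : 0 ≤ r2 := Real.sqrt_nonneg _
  have hr22 : r2^2 = t / a^2 := Real.sq_sqrt hq0
  have hr21 : r2 < 1 := by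
    have h := Real.sqrt_lt_sqrt hq0 (by rw [div_lt_one (by positivity : (0:ℝ) < a^2)]; linarith : t/a^2 < 1)
    simpa using h
  set ρ : ℝ := max r1 r2 with hρdef
  have hρ0 : 0 ≤ ρ := le_trans hr10 (le_max_left _ _)
  have hρ1 : ρ < 1 := max_lt hr11 hr21
  refine ⟨3 / (1 - ρ), ?_⟩
  intro m hm
  have hε_def : True := trivial
  set ε : ℝ := if Even m then t^(3*(m/2)) else 0 with hεdef
  have hε0 : 0 ≤ ε := by rw [hεdef]; split <;> positivity
  -- closed form of the G-sums
  have hG : Gs t (3*m) + t * Gs t (3*m-2) = a^(3*m) + b^(3*m) := by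
    have h := Gs_pair t a b hab hmab hne (3*m-2)
    rw [show 3*m-2+2 = 3*m from by omega] at h
    exact h
  have hsum := main_sum α hα m hm
  rw [hG] at hsum
  have hβm : β^m = α^(2*m) * a^(3*m) := by
    rw [hβa, mul_pow, ← pow_mul, ← pow_mul]
  have hαpow : (0:ℝ) < α^(2*m) := pow_pos hα _
  have hapow : (0:ℝ) < a^(3*m) := pow_pos ha0 _
  -- the error term
  have hval : (∑ n ∈ Finset.Icc ((m + 2) / 2) (2 * m),
          ((m : ℝ) / (n + m)) * (Nat.choose (m + n) (2 * m - n)) * α ^ n)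
        / ((1 / 3) * β ^ m) - 1 = b^(3*m)/a^(3*m) - 2*ε/a^(3*m) := by
    rw [hsum, hβm]
    have h1 : (if Even m then 2 * t^(3*(m/2)) else 0) = 2 * ε := by
      rw [hεdef]; split <;> ring
    rw [h1]
    field_simp
    ring
  rw [hval]
  have hbound1 : |b^(3*m)/a^(3*m)| ≤ r1^m := by
    rw [abs_div, abs_pow, abs_pow, abs_of_pos ha0, ← div_pow, ← hr1def]
    exact pow_le_pow_of_le_one hr10 (le_of_lt hr11) (by omega)
  have hbound2 : |2*ε/a^(3*m)| ≤ 2 * r2^m := by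
    rw [abs_of_nonneg (by positivity)]
    rcases Nat.even_or_odd m with he | ho
    · obtain ⟨p, hp⟩ := he
      have hp' : m = 2*p := by omega
      have hεval : ε = t^(3*p) := by
        rw [hεdef, if_pos ⟨p, hp⟩, show 3*(m/2) = 3*p from by omega]
      have h3m : 3*m = 2*(3*p) := by omega
      have hfrac : ε/a^(3*m) = (t/a^2)^(3*p) := by
        rw [hεval, h3m]
        exact frac_aux a t p
      have h6 : ε/a^(3*m) = r2^(2*(3*p)) := by
        rw [hfrac]
        exact sq_aux r2 (t/a^2) hr22 p
      rw [mul_div_assoc, h6]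
      have : r2^(2*(3*p)) ≤ r2^m := pow_le_pow_of_le_one hr20 (le_of_lt hr21) (by omega)
      linarith
    · have hεval : ε = 0 := by
        rw [hεdef, if_neg]
        simp [Nat.even_iff, Nat.odd_iff.mp ho]
      rw [hεval]
      simp
      positivity
  have htotal : |b^(3*m)/a^(3*m) - 2*ε/a^(3*m)| ≤ r1^m + 2*r2^m := by
    calc |b^(3*m)/a^(3*m) - 2*ε/a^(3*m)| ≤ |b^(3*m)/a^(3*m)| + |2*ε/a^(3*m)| := abs_sub _ _
      _ ≤ r1^m + 2*r2^m := add_le_add hbound1 hbound2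
  have hρm : r1^m + 2*r2^m ≤ 3 * ρ^m := by
    have h1 : r1^m ≤ ρ^m := pow_le_pow_left₀ hr10 (le_max_left _ _) m
    have h2 : r2^m ≤ ρ^m := pow_le_pow_left₀ hr20 (le_max_right _ _) m
    linarith
  have hgeo := geo_bound ρ hρ0 hρ1 m hm
  have hmpos : (0:ℝ) < (m:ℝ) := by exact_mod_cast hm
  have h1ρ : 0 < 1 - ρ := by linarith
  have hfinal : 3 * ρ^m ≤ 3/(1-ρ) / m := by
    rw [div_div, le_div_iff₀ (by positivity)]
    nlinarith [hgeo]
  linarith [htotal, hρm, hfinal]
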